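/- Let n ≥ 3 and let μ = (μ₁,…,μₙ) ∈ ℤⁿ be weakly decreasing. Set Pⱼ := μ₁+⋯+μⱼ and T := Pₙ, and define D(μ) as the maximum of the finite set consisting of the numbers Pᵢ + P_{n−i} − T for 1 ≤ i ≤ ⌊(n−1)/2⌋, together with the number P_{n/2} − T/2 when n is even. Then D(μ) ≤ 1 or D(μ) ≥ 2; that is, D(μ) never lies strictly between 1 and 2. -/

import Mathlib

/-- Sum of the first `j` entries of a vector indexed by `Fin n` (the value `Pⱼ`). -/
def psum {n : ℕ} (μ : Fin n → ℤ) (j : ℕ) : ℤ :=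
  ∑ i ∈ Finset.univ.filter (fun i : Fin n => (i : ℕ) < j), μ i

/-- The depth `D(μ)` of a weakly decreasing `μ ∈ ℤⁿ` for the quasi-split non-split
outer form of type `A_{n-1}`: the maximum of the numbers `Pᵢ + P_{n−i} − T` for
`1 ≤ i ≤ ⌊(n−1)/2⌋`, together with `P_{n/2} − T/2` when `n` is even. -/
def Dqs {n : ℕ} (μ : Fin n → ℤ) : ℚ :=
  if h : (Finset.Icc 1 ((n - 1) / 2)).Nonempty then
    if n % 2 = 0 then
      max
        ((Finset.Icc 1 ((n - 1) / 2)).sup' h fun i : ℕ =>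
          ((psum μ i : ℚ) + (psum μ (n - i) : ℚ) - (psum μ n : ℚ)))
        ((psum μ (n / 2) : ℚ) - (psum μ n : ℚ) / 2)
    else
      (Finset.Icc 1 ((n - 1) / 2)).sup' h fun i : ℕ =>
        ((psum μ i : ℚ) + (psum μ (n - i) : ℚ) - (psum μ n : ℚ))
  else 0

lemma psum_zero {n : ℕ} (μ : Fin n → ℤ) : psum μ 0 = 0 := by
  unfold psum
  rw [Finset.filter_false_of_mem (by simp)]
  simp

lemma psum_succ {n : ℕ} (μ : Fin n → ℤ) (j : ℕ) (hj : j < n) :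
    psum μ (j + 1) = psum μ j + μ ⟨j, hj⟩ := by
  unfold psum
  rw [show (Finset.univ.filter fun i : Fin n => (i : ℕ) < j + 1)
      = insert ⟨j, hj⟩ (Finset.univ.filter fun i : Fin n => (i : ℕ) < j) by
    ext i
    simp [Nat.lt_succ_iff_lt_or_eq, Nat.le_iff_lt_or_eq, Fin.ext_iff, or_comm]]
  rw [Finset.sum_insert (by simp)]
  ring

lemma psum_ge {n : ℕ} (μ : Fin n → ℤ) (hμ : Antitone μ) (k : ℕ) (hk : k ≤ n)
    (t : Fin n) (ht : k ≤ (t : ℕ) + 1) : (k : ℤ) * μ t ≤ psum μ k := by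
  induction k with
  | zero => simp [psum_zero]
  | succ k ih =>
    rw [psum_succ μ k (by omega)]
    have h1 : μ t ≤ μ ⟨k, by omega⟩ := hμ (by simp [Fin.le_def]; omega)
    have h2 := ih (by omega) (by omega)
    push_cast
    linarith

lemma psum_le_add {n : ℕ} (μ : Fin n → ℤ) (hμ : Antitone μ) (m k : ℕ)
    (hmk : m + k ≤ n) (t : Fin n) (ht : (t : ℕ) ≤ m) :
    psum μ (m + k) ≤ psum μ m + (k : ℤ) * μ t := by
  induction k with
  | zero => simp
  | succ k ih =>
    rw [show m + (k + 1) = (m + k) + 1 by ring, psum_succ μ (m + k) (by omega)]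
    have h1 : μ ⟨m + k, by omega⟩ ≤ μ t := hμ (by simp [Fin.le_def]; omega)
    have h2 := ih (by omega)
    push_cast
    linarith

lemma half_gap {n : ℕ} (m : ℕ) (hm2 : 2 ≤ m) (hnm : n = m + m) (μ : Fin n → ℤ)
    (hμ : Antitone μ) (h3 : 2 * psum μ m - psum μ n = 3) :
    2 ≤ psum μ (m - 1) + psum μ (n - (m - 1)) - psum μ n := by
  have hlt1 : m - 1 < n := by omega
  have hlt2 : m < n := by omega
  have e1 : psum μ m = psum μ (m - 1) + μ ⟨m - 1, hlt1⟩ := by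
    have := psum_succ μ (m - 1) hlt1
    rw [show m - 1 + 1 = m by omega] at this
    exact this
  have e2 : psum μ (m + 1) = psum μ m + μ ⟨m, hlt2⟩ := psum_succ μ m (by omega)
  have e3 : n - (m - 1) = m + 1 := by omega
  rw [e3, e2, e1]
  have hd : μ ⟨m - 1, hlt1⟩ - μ ⟨m, hlt2⟩ ≤ 1 := by
    by_contra hcon
    push_neg at hcon
    have hd2 : 2 ≤ μ ⟨m - 1, hlt1⟩ - μ ⟨m, hlt2⟩ := hcon
    have hlo : (m : ℤ) * μ ⟨m - 1, hlt1⟩ ≤ psum μ m :=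
      psum_ge μ hμ m (by omega) ⟨m - 1, hlt1⟩ (by simp; omega)
    have hhi : psum μ n ≤ psum μ m + (m : ℤ) * μ ⟨m, hlt2⟩ := by
      have := psum_le_add μ hμ m m (by omega) ⟨m, hlt2⟩ (by simp)
      rwa [← hnm] at this
    have hm2' : (2 : ℤ) ≤ (m : ℤ) := by exact_mod_cast hm2
    nlinarith [hd2, hlo, hhi, h3]
  rw [e1] at h3
  linarith

theorem stmt2 (n : ℕ) (hn : 3 ≤ n) (μ : Fin n → ℤ) (hμ : Antitone μ) :
    Dqs μ ≤ 1 ∨ 2 ≤ Dqs μ := by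
  have hne : (Finset.Icc 1 ((n - 1) / 2)).Nonempty := by
    refine ⟨1, ?_⟩
    simp only [Finset.mem_Icc]
    omega
  obtain ⟨F, hFdef⟩ : ∃ F : ℤ, (Finset.Icc 1 ((n - 1) / 2)).sup' hne
      (fun i : ℕ => psum μ i + psum μ (n - i) - psum μ n) = F := ⟨_, rfl⟩
  have hcast : ((Finset.Icc 1 ((n - 1) / 2)).sup' hne fun i : ℕ =>
      ((psum μ i : ℚ) + (psum μ (n - i) : ℚ) - (psum μ n : ℚ))) = (F : ℚ) := by
    rw [← hFdef, Finset.comp_sup'_eq_sup'_comp hne (Int.cast : ℤ → ℚ)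
      (fun x y => by exact_mod_cast Int.cast_max)]
    refine Finset.sup'_congr hne rfl fun i _ => ?_
    simp only [Function.comp_apply]
    push_cast
    ring
  unfold Dqs
  rw [dif_pos hne, hcast]
  by_cases hpar : n % 2 = 0
  · rw [if_pos hpar]
    obtain ⟨m, hmdef⟩ : ∃ m, n / 2 = m := ⟨_, rfl⟩
    rw [hmdef]
    have hm2 : 2 ≤ m := by omega
    have hnm : n = m + m := by omega
    obtain ⟨s, hsdef⟩ : ∃ s : ℤ, 2 * psum μ m - psum μ n = s := ⟨_, rfl⟩
    have hg : (psum μ m : ℚ) - (psum μ n : ℚ) / 2 = (s : ℚ) / 2 := by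
      rw [← hsdef]; push_cast; ring
    rw [hg]
    have key : F ≤ 1 → s ≠ 3 := by
      intro hF1 hs3
      have hmem : m - 1 ∈ Finset.Icc 1 ((n - 1) / 2) := by
        simp only [Finset.mem_Icc]; omega
      have hle : psum μ (m - 1) + psum μ (n - (m - 1)) - psum μ n ≤ F := by
        rw [← hFdef]
        exact Finset.le_sup' (fun i : ℕ => psum μ i + psum μ (n - i) - psum μ n) hmem
      have hgap := half_gap m hm2 hnm μ hμ (by rw [hsdef, hs3])
      linarith
    rcases le_or_gt F 1 with hF1 | hF2
    · have hs3 := key hF1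
      rcases le_or_gt s 2 with hs2 | hs4
      · left
        apply max_le
        · exact_mod_cast hF1
        · rw [div_le_one (by norm_num)]
          exact_mod_cast hs2
      · right
        have hs4' : (4 : ℤ) ≤ s := by omega
        refine le_trans ?_ (le_max_right _ _)
        rw [le_div_iff₀ (by norm_num)]
        exact_mod_cast hs4'
    · right
      refine le_trans ?_ (le_max_left _ _)
      exact_mod_cast hF2
  · rw [if_neg hpar]
    rcases le_or_gt F 1 with h | h
    · left; exact_mod_cast h
    · right; exact_mod_cast h
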